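/- Let A be a commutative ring, m₁, …, m_n pairwise distinct maximal ideals of A, and M an A-module supported on {m₁, …, m_n}. Then the canonical map M → ∏_{i=1}^n M_{m_i} given by the localization maps is an isomorphism. -/
import Mathlib


/-- If `M` is a module over a commutative ring `A` supported on finitely many pairwise
distinct maximal ideals `m 1, …, m n`, then the canonical map `M → ∏ᵢ M_{mᵢ}` given by
the localization maps is an isomorphism. -/
theorem module_supported_on_maximals_eq_product_of_localizations
    (A : Type*) [CommRing A] (M : Type*) [AddCommGroup M] [Module A M]
    (n : ℕ) (m : Fin n → Ideal A) (hmax : ∀ i, (m i).IsMaximal)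
    (hdist : Function.Injective m)
    (hsupp : ∀ (p : Ideal A) (_ : p.IsPrime) (_ : ∀ i, p ≠ m i),
      Subsingleton (LocalizedModule p.primeCompl M)) :
    Function.Bijective
      (fun x : M => fun i => LocalizedModule.mkLinearMap (m i).primeCompl M x) := by
  classical
  -- every prime containing the annihilator of an element is one of the `m i`
  have h1 : ∀ (z : M) (p : Ideal A), p.IsPrime → Ideal.torsionOf A M z ≤ p → ∃ i, p = m i := by
    intro z p hp hle
    by_contra hno
    push_neg at hno
    have hss := hsupp p hp hno
    have h0 : (LocalizedModule.mk z 1 : LocalizedModule p.primeCompl M)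
        = LocalizedModule.mk 0 1 := Subsingleton.elim _ _
    rw [LocalizedModule.mk_eq] at h0
    obtain ⟨u, hu⟩ := h0
    simp only [one_smul, smul_zero] at hu
    exact u.2 (hle ((Ideal.mem_torsionOf_iff z u.1).mpr hu))
  -- separation: given a prime `p` and a finite set of maximal ideals `≠ p`,
  -- there is `u ∉ p` lying in all of them
  have hsep : ∀ (p : Ideal A), p.IsPrime → ∀ (s : Finset (Fin n)), (∀ k ∈ s, m k ≠ p) →
      ∃ u, u ∉ p ∧ ∀ k ∈ s, u ∈ m k := by
    intro p hp s hs
    have hex : ∀ k : {x // x ∈ s}, ∃ a, a ∈ m k.1 ∧ a ∉ p := by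
      rintro ⟨k, hk⟩
      by_contra hc
      push_neg at hc
      exact hs k hk ((hmax k).eq_of_le hp.ne_top fun a ha => hc a ha)
    choose a ha hap using hex
    refine ⟨∏ k ∈ s.attach, a k, ?_, ?_⟩
    · have : ∏ k ∈ s.attach, a k ∈ p.primeCompl :=
        Submonoid.prod_mem _ fun k _ => hap k
      exact this
    · intro k hk
      have hmem : (⟨k, hk⟩ : {x // x ∈ s}) ∈ s.attach := Finset.mem_attach _ _
      rw [← Finset.mul_prod_erase _ _ hmem]
      exact Ideal.mul_mem_right _ _ (ha ⟨k, hk⟩)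
  -- key killing lemma: distinct primes separate every element of `M`
  have hB : ∀ (z : M) (p q : Ideal A), p.IsPrime → q.IsPrime → p ≠ q →
      ∃ u, u ∉ p ∧ ∃ v, v ∉ q ∧ (u * v) • z = 0 := by
    intro z p q hp hq hpq
    set I := Ideal.torsionOf A M z with hI
    obtain ⟨u₀, hu₀p, hu₀⟩ := hsep p hp
      (Finset.univ.filter (fun k => I ≤ m k ∧ m k ≠ p))
      (fun k hk => (Finset.mem_filter.mp hk).2.2)
    obtain ⟨v₀, hv₀q, hv₀⟩ := hsep q hq
      (Finset.univ.filter (fun k => I ≤ m k ∧ m k ≠ q))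
      (fun k hk => (Finset.mem_filter.mp hk).2.2)
    have hrad : u₀ * v₀ ∈ I.radical := by
      rw [Ideal.radical_eq_sInf]
      refine Submodule.mem_sInf.mpr ?_
      rintro J ⟨hIJ, hJ⟩
      obtain ⟨k, rfl⟩ := h1 z J hJ hIJ
      by_cases hk : m k = p
      · have hk2 : k ∈ Finset.univ.filter (fun k => I ≤ m k ∧ m k ≠ q) := by
          refine Finset.mem_filter.mpr ⟨Finset.mem_univ _, hIJ, ?_⟩
          rw [hk]; exact hpq
        exact Ideal.mul_mem_left _ _ (hv₀ k hk2)
      · have hk1 : k ∈ Finset.univ.filter (fun k => I ≤ m k ∧ m k ≠ p) :=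
          Finset.mem_filter.mpr ⟨Finset.mem_univ _, hIJ, hk⟩
        exact Ideal.mul_mem_right _ _ (hu₀ k hk1)
    obtain ⟨N, hN⟩ := (Ideal.mem_radical_iff).mp hrad
    refine ⟨u₀ ^ N, fun h => hu₀p (hp.mem_of_pow_mem _ h),
      v₀ ^ N, fun h => hv₀q (hq.mem_of_pow_mem _ h), ?_⟩
    rw [← mul_pow]
    exact (Ideal.mem_torsionOf_iff z _).mp hN
  -- every element of the localization at `m j` is killed by some `c ∉ p`, for primes `p ≠ m j`
  have hC : ∀ (j : Fin n) (p : Ideal A), p.IsPrime → p ≠ m j →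
      ∀ w : LocalizedModule (m j).primeCompl M, ∃ c, c ∉ p ∧ c • w = 0 := by
    intro j p hp hpj w
    induction w using LocalizedModule.induction_on with
    | _ z s =>
      obtain ⟨u, hup, v, hvj, huv⟩ := hB z p (m j) hp (hmax j).isPrime hpj
      refine ⟨u, hup, ?_⟩
      rw [LocalizedModule.smul'_mk, show (0 : LocalizedModule (m j).primeCompl M)
        = LocalizedModule.mk 0 1 from (LocalizedModule.zero_mk _).symm, LocalizedModule.mk_eq]
      refine ⟨⟨v, hvj⟩, ?_⟩
      have : (v * u) • z = 0 := by rwa [mul_comm]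
      simp [Submonoid.smul_def, smul_smul, this]
  constructor
  · -- injectivity
    intro x₁ x₂ hx
    have key : ∀ x : M, (∀ i, (LocalizedModule.mk x 1 :
        LocalizedModule (m i).primeCompl M) = 0) → x = 0 := by
      intro x hx0
      by_contra hx'
      have hne : Ideal.torsionOf A M x ≠ ⊤ := by
        intro h
        refine hx' ?_
        have : (1 : A) ∈ Ideal.torsionOf A M x := h ▸ Submodule.mem_top
        simpa using (Ideal.mem_torsionOf_iff x 1).mp this
      obtain ⟨P, hP, hle⟩ := Ideal.exists_le_maximal _ hne
      obtain ⟨i, rfl⟩ := h1 x P hP.isPrime hle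
      have h0 := hx0 i
      rw [show (0 : LocalizedModule (m i).primeCompl M)
        = LocalizedModule.mk 0 1 from (LocalizedModule.zero_mk _).symm,
        LocalizedModule.mk_eq] at h0
      obtain ⟨u, hu⟩ := h0
      simp only [one_smul, smul_zero] at hu
      exact u.2 (hle ((Ideal.mem_torsionOf_iff x u.1).mpr hu))
    have hsub : x₁ - x₂ = 0 := by
      refine key _ fun i => ?_
      have h := congrFun hx i
      simp only at h
      have : (LocalizedModule.mkLinearMap (m i).primeCompl M) (x₁ - x₂) = 0 := by
        rw [map_sub, h, sub_self]
      simpa [LocalizedModule.mkLinearMap_apply] using this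
    exact sub_eq_zero.mp hsub
  · -- surjectivity
    have hsurj : Function.Surjective
        (LinearMap.pi fun i => LocalizedModule.mkLinearMap (m i).primeCompl M :
          M →ₗ[A] ∀ i, LocalizedModule (m i).primeCompl M) := by
      apply surjective_of_localized_maximal
      intro P hPmax ξ
      induction ξ using LocalizedModule.induction_on with
      | _ y t =>
        by_cases h : ∃ i, P = m i
        · obtain ⟨i, rfl⟩ := h
          obtain ⟨⟨z, s⟩, hzs⟩ := IsLocalizedModule.surj (m i).primeCompl
            (LocalizedModule.mkLinearMap (m i).primeCompl M) (y i)
          -- killers for the other coordinates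
          have hkill : ∀ j : Fin n, ∃ c : A, c ∉ m i ∧ (j ≠ i →
              c • ((LocalizedModule.mk z 1 : LocalizedModule (m j).primeCompl M) - s.1 • y j)
                = 0) := by
            intro j
            by_cases hj : j = i
            · exact ⟨1, (m i).primeCompl.one_mem, fun h' => absurd hj h'⟩
            · obtain ⟨c, hc, hc0⟩ := hC j (m i) (hmax i).isPrime
                (fun he => hj (hdist he.symm)) _
              exact ⟨c, hc, fun _ => hc0⟩
          choose c hc1 hc2 using hkill
          refine ⟨LocalizedModule.mk z (s * t), ?_⟩
          rw [LocalizedModule.map_mk, LocalizedModule.mk_eq]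
          refine ⟨⟨∏ j, c j, Submonoid.prod_mem _ fun j _ => hc1 j⟩, ?_⟩
          funext j
          simp only [Pi.smul_apply, LinearMap.pi_apply, LocalizedModule.mkLinearMap_apply,
            Submonoid.smul_def, Submonoid.coe_mul]
          by_cases hj : j = i
          · subst hj
            have hzs' : (s.1 : A) • y j = LocalizedModule.mk z 1 := by
              simpa [Submonoid.smul_def, LocalizedModule.mkLinearMap_apply] using hzs
            rw [← hzs']
            simp only [smul_smul]
            congr 1
            ring
          · have e := hc2 j hj
            rw [smul_sub, sub_eq_zero] at e
            have e' : c j • (LocalizedModule.mk z 1 :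
                LocalizedModule (m j).primeCompl M) = (c j * s.1) • y j := by
              rw [e, smul_smul]
            rw [← Finset.mul_prod_erase _ _ (Finset.mem_univ j)]
            set r := ∏ k ∈ Finset.univ.erase j, c k with hr
            calc (c j * r) • (t.1 : A) • (LocalizedModule.mk z 1 :
                LocalizedModule (m j).primeCompl M)
                = (r * t.1) • (c j • (LocalizedModule.mk z 1 :
                    LocalizedModule (m j).primeCompl M)) := by
                  simp only [smul_smul]
                  rw [show c j * r * t.1 = r * t.1 * c j from by ring]
              _ = (r * t.1) • ((c j * s.1) • y j) := by rw [e']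
              _ = (c j * r) • ((s.1 : A) * t.1) • y j := by
                  simp only [smul_smul]
                  rw [show r * t.1 * (c j * s.1) = c j * r * (s.1 * t.1) from by ring]
        · push_neg at h
          have hk : ∀ j, ∃ c, c ∉ P ∧ c • y j = 0 := fun j =>
            hC j P hPmax.isPrime (h j) (y j)
          choose c hc1 hc2 using hk
          refine ⟨0, ?_⟩
          rw [map_zero]
          symm
          rw [show (0 : LocalizedModule P.primeCompl (∀ i, LocalizedModule (m i).primeCompl M))
            = LocalizedModule.mk 0 1 from (LocalizedModule.zero_mk _).symm,
            LocalizedModule.mk_eq]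
          refine ⟨⟨∏ j, c j, Submonoid.prod_mem _ fun j _ => hc1 j⟩, ?_⟩
          funext j
          simp only [Pi.smul_apply, Pi.zero_apply, smul_zero, one_smul, Submonoid.smul_def]
          rw [← Finset.mul_prod_erase _ _ (Finset.mem_univ j), mul_comm, mul_smul, hc2 j,
            smul_zero]
    exact hsurj
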